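/- Let d ≥ 4, and let A_Y(d) and A_Z(d) be as defined, with 𝔪_Y ⊂ A_Y(d) the ideal generated by the images of all the variables q,Q,e,b_0,…,b_d, and 𝔪_Z ⊂ A_Z(d) the ideal generated by the images of all the variables q,Q,e,a_0,…,a_d. Then the 𝔪_Y-adic completion of A_Y(d) and the 𝔪_Z-adic completion of A_Z(d) are isomorphic as ℂ-algebras. -/

import Mathlib

open MvPolynomial

/-- The sequence `Ψ 0 = 1`, `Ψ 1 = e`, `Ψ m = e·Ψ (m−1) − p·Ψ (m−2)`. -/
noncomputable def Psi {R : Type*} [CommRing R] (p e : R) : ℕ → R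
  | 0 => 1
  | 1 => e
  | m + 2 => e * Psi p e (m + 1) - p * Psi p e m

/-- The `i`-th variable of a polynomial ring in `d+4` variables over `ℂ`. -/
noncomputable def mvar (d i : ℕ) : MvPolynomial (Fin (d + 4)) ℂ :=
  if h : i < d + 4 then MvPolynomial.X ⟨i, h⟩ else 0

/-- The defining ideal of `A_Y(d)` inside `ℂ[q,Q,e,b_0,…,b_d]`
(`q = mvar d 0`, `Q = mvar d 1`, `e = mvar d 2`, `b_j = mvar d (3+j)`). -/
noncomputable def AYideal (d : ℕ) : Ideal (MvPolynomial (Fin (d + 4)) ℂ) :=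
  Ideal.span
    ({p | ∃ j : ℕ, 1 ≤ j ∧ j ≤ d - 1 ∧
        p = mvar d 2 * mvar d (3 + j) - mvar d 0 * mvar d (3 + (j + 1))
              - mvar d 1 * mvar d (3 + (j - 1))} ∪
     {p | ∃ j k : ℕ, 1 ≤ j ∧ j ≤ k ∧ k ≤ d - 1 ∧
        p = mvar d (3 + j) * mvar d (3 + k) - mvar d (3 + (j - 1)) * mvar d (3 + (k + 1))
              - mvar d 0 ^ (d - k - 1) * mvar d 1 ^ (j - 1) *
                  Psi (mvar d 0 * mvar d 1) (mvar d 2) (k - j)})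

/-- The defining ideal of `A_Z(d)` inside `ℂ[q,Q,e,a_0,…,a_d]`
(`q = mvar d 0`, `Q = mvar d 1`, `e = mvar d 2`, `a_j = mvar d (3+j)`). -/
noncomputable def AZideal (d : ℕ) : Ideal (MvPolynomial (Fin (d + 4)) ℂ) :=
  Ideal.span
    ({p | ∃ j : ℕ, 1 ≤ j ∧ j ≤ d - 1 ∧
        p = mvar d 2 * mvar d (3 + j) - mvar d 0 * mvar d (3 + (j + 1))
              - mvar d 1 * mvar d (3 + (j - 1))} ∪
     {p | ∃ j k : ℕ, 1 ≤ j ∧ j ≤ k ∧ k ≤ d - 1 ∧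
        p = mvar d (3 + (j - 1)) * mvar d (3 + (k + 1)) - mvar d (3 + j) * mvar d (3 + k)
              - (mvar d 2 ^ 2 - 4 * (mvar d 0 * mvar d 1) - (d : MvPolynomial (Fin (d + 4)) ℂ) ^ 2)
                * mvar d 0 ^ (d - k - 1) * mvar d 1 ^ (j - 1) *
                  Psi (mvar d 0 * mvar d 1) (mvar d 2) (k - j)})

/-- The quotient ring `A_Y(d)`. -/
abbrev AY (d : ℕ) := MvPolynomial (Fin (d + 4)) ℂ ⧸ AYideal d

/-- The quotient ring `A_Z(d)`. -/
abbrev AZ (d : ℕ) := MvPolynomial (Fin (d + 4)) ℂ ⧸ AZideal d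

/-- The ideal `𝔪_Y ⊂ A_Y(d)` generated by the images of all the variables. -/
noncomputable def mY (d : ℕ) : Ideal (AY d) :=
  Ideal.span (Set.range fun i : Fin (d + 4) => Ideal.Quotient.mk (AYideal d) (MvPolynomial.X i))

/-- The ideal `𝔪_Z ⊂ A_Z(d)` generated by the images of all the variables. -/
noncomputable def mZ (d : ℕ) : Ideal (AZ d) :=
  Ideal.span (Set.range fun i : Fin (d + 4) => Ideal.Quotient.mk (AZideal d) (MvPolynomial.X i))

set_option synthInstance.maxHeartbeats 1000000
set_option maxHeartbeats 2000000

namespace Stmt9Aux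

abbrev Rd (d : ℕ) : Type := MvPolynomial (Fin (d + 4)) ℂ

noncomputable def mm (d : ℕ) : Ideal (Rd d) := Ideal.span (Set.range MvPolynomial.X)

noncomputable def ww (d : ℕ) : Rd d :=
  (d : Rd d) ^ 2 + 4 * (mvar d 0 * mvar d 1) - mvar d 2 ^ 2

noncomputable def WW (d : ℕ) : ℕ → Rd d
  | 0 => MvPolynomial.C ((d : ℂ))⁻¹
  | n + 1 => WW d n * (3 - ww d * WW d n ^ 2) * MvPolynomial.C (2⁻¹ : ℂ)

lemma X_mem_mm (d : ℕ) (i : Fin (d + 4)) : (MvPolynomial.X i : Rd d) ∈ mm d :=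
  Ideal.subset_span ⟨i, rfl⟩

lemma mvar_mem_mm (d i : ℕ) : mvar d i ∈ mm d := by
  unfold mvar; split
  · exact X_mem_mm d _
  · exact zero_mem _

lemma newton_step {A : Type*} [CommRing A] (w W half : A) (h2 : half * 2 = 1) :
    w * (W * (3 - w * W ^ 2) * half) ^ 2 - 1
      = (w * W ^ 2 - 1) ^ 2 * ((w * W ^ 2 - 1) - 3) * (half * half) := by
  linear_combination (2 * half + 1) * h2

lemma newton_diff {A : Type*} [CommRing A] (w W half : A) (h2 : half * 2 = 1) :
    W * (3 - w * W ^ 2) * half - W = (w * W ^ 2 - 1) * (-(W * half)) := by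
  linear_combination W * h2

lemma half_mul_two (d : ℕ) : (MvPolynomial.C (2⁻¹ : ℂ) : Rd d) * 2 = 1 := by
  have : (2 : Rd d) = MvPolynomial.C (2 : ℂ) := by
    rw [map_ofNat]
  rw [this, ← map_mul, ← map_one (MvPolynomial.C : ℂ →+* Rd d)]
  norm_num

lemma hWW (d : ℕ) (hd : (d : ℂ) ≠ 0) : ∀ n, ww d * WW d n ^ 2 - 1 ∈ mm d ^ (n + 2)
  | 0 => by
      have h1 : (d : Rd d) * MvPolynomial.C ((d : ℂ))⁻¹ = 1 := by
        rw [← map_natCast (MvPolynomial.C : ℂ →+* Rd d) d, ← map_mul,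
          mul_inv_cancel₀ hd, map_one]
      have key : ww d * WW d 0 ^ 2 - 1
          = (4 * (mvar d 0 * mvar d 1) - mvar d 2 ^ 2) * MvPolynomial.C ((d : ℂ))⁻¹ ^ 2 := by
        unfold ww WW
        linear_combination ((d : Rd d) * MvPolynomial.C ((d : ℂ))⁻¹ + 1) * h1
      rw [key]
      have h4 : 4 * (mvar d 0 * mvar d 1) - mvar d 2 ^ 2 ∈ mm d ^ 2 := by
        have ha : mvar d 0 * mvar d 1 ∈ mm d ^ 2 := by
          rw [sq]; exact Ideal.mul_mem_mul (mvar_mem_mm d 0) (mvar_mem_mm d 1)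
        have hb : mvar d 2 ^ 2 ∈ mm d ^ 2 := by
          rw [sq, sq]; exact Ideal.mul_mem_mul (mvar_mem_mm d 2) (mvar_mem_mm d 2)
        exact sub_mem (Ideal.mul_mem_left _ _ ha) hb
      exact Ideal.mul_mem_right _ _ h4
  | (n + 1) => by
      have ih := hWW d hd n
      have key := newton_step (ww d) (WW d n) (MvPolynomial.C (2⁻¹ : ℂ)) (half_mul_two d)
      show ww d * WW d (n + 1) ^ 2 - 1 ∈ _
      unfold WW
      rw [key]
      have h1 : (ww d * WW d n ^ 2 - 1) ^ 2 ∈ mm d ^ (n + 3) := by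
        have : (ww d * WW d n ^ 2 - 1) ^ 2 ∈ mm d ^ (n + 2) * mm d ^ (n + 2) := by
          rw [sq]; exact Ideal.mul_mem_mul ih ih
        rw [← pow_add] at this
        exact Ideal.pow_le_pow_right (by omega) this
      exact Ideal.mul_mem_right _ _ (Ideal.mul_mem_right _ _ h1)

lemma hWdiff (d : ℕ) (hd : (d : ℂ) ≠ 0) :
    ∀ m n, m ≤ n → WW d n - WW d m ∈ mm d ^ m := by
  intro m n hmn
  induction n, hmn using Nat.le_induction with
  | base => simp
  | succ n hmn ih =>
      have h1 : WW d (n + 1) - WW d n ∈ mm d ^ m := by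
        have key := newton_diff (ww d) (WW d n) (MvPolynomial.C (2⁻¹ : ℂ)) (half_mul_two d)
        show WW d n * (3 - ww d * WW d n ^ 2) * MvPolynomial.C (2⁻¹ : ℂ) - WW d n ∈ _
        rw [key]
        exact Ideal.pow_le_pow_right (by omega)
          (Ideal.mul_mem_right _ _ (hWW d hd n))
      have := add_mem h1 ih
      simpa using this


lemma Psi_map {A B : Type*} [CommRing A] [CommRing B] (f : A →+* B) (p e : A) :
    ∀ k, f (Psi p e k) = Psi (f p) (f e) k
  | 0 => by simp [Psi]
  | 1 => by simp [Psi]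
  | (k + 2) => by
      simp only [Psi, map_sub, map_mul, Psi_map f p e (k + 1), Psi_map f p e k]

noncomputable def FF (d : ℕ) (V : Rd d) : Rd d →ₐ[ℂ] Rd d :=
  aeval (fun i : Fin (d + 4) => if 3 ≤ (i : ℕ) then V * MvPolynomial.X i else MvPolynomial.X i)

lemma FF_X (d : ℕ) (V : Rd d) (i : Fin (d + 4)) :
    FF d V (MvPolynomial.X i)
      = if 3 ≤ (i : ℕ) then V * MvPolynomial.X i else MvPolynomial.X i := by
  simp [FF]

lemma FF_C (d : ℕ) (V : Rd d) (c : ℂ) :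
    FF d V (MvPolynomial.C c) = MvPolynomial.C c := by
  simp [FF, algebraMap_eq]

lemma FF_mvar_lt (d : ℕ) (V : Rd d) (i : ℕ) (h : i < 3) :
    FF d V (mvar d i) = mvar d i := by
  unfold mvar; split
  · rw [FF_X]; simp [Nat.not_le.mpr h]
  · simp

lemma FF_mvar_ge (d : ℕ) (V : Rd d) (i : ℕ) (h : 3 ≤ i) :
    FF d V (mvar d i) = V * mvar d i := by
  unfold mvar; split
  · rw [FF_X]; simp [h]
  · simp

lemma FF_mvar0 (d : ℕ) (V : Rd d) : FF d V (mvar d 0) = mvar d 0 := FF_mvar_lt d V 0 (by omega)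
lemma FF_mvar1 (d : ℕ) (V : Rd d) : FF d V (mvar d 1) = mvar d 1 := FF_mvar_lt d V 1 (by omega)
lemma FF_mvar2 (d : ℕ) (V : Rd d) : FF d V (mvar d 2) = mvar d 2 := FF_mvar_lt d V 2 (by omega)
lemma FF_mvar3 (d : ℕ) (V : Rd d) (t : ℕ) :
    FF d V (mvar d (3 + t)) = V * mvar d (3 + t) := FF_mvar_ge d V _ (by omega)

lemma FF_psi (d : ℕ) (V : Rd d) (k : ℕ) :
    FF d V (Psi (mvar d 0 * mvar d 1) (mvar d 2) k)
      = Psi (mvar d 0 * mvar d 1) (mvar d 2) k := by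
  rw [show (FF d V : Rd d → Rd d) = ((FF d V).toRingHom : Rd d → Rd d) from rfl]
  rw [Psi_map]
  simp only [AlgHom.toRingHom_eq_coe, RingHom.coe_coe, map_mul, FF_mvar0, FF_mvar1, FF_mvar2]

lemma FF_ww (d : ℕ) (V : Rd d) : FF d V (ww d) = ww d := by
  unfold ww
  simp only [map_add, map_sub, map_pow, map_mul, map_natCast, map_ofNat,
    FF_mvar0, FF_mvar1, FF_mvar2]

lemma FF_WW (d : ℕ) (V : Rd d) : ∀ n, FF d V (WW d n) = WW d n
  | 0 => FF_C d V _
  | (n + 1) => by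
      show FF d V (WW d n * (3 - ww d * WW d n ^ 2) * MvPolynomial.C (2⁻¹ : ℂ)) = _
      rw [map_mul, map_mul, map_sub, map_mul, map_pow, FF_ww, FF_WW d V n, FF_C, map_ofNat]
      rfl

lemma agree {T : Type*} [CommRing T] [Algebra ℂ T] (d : ℕ) (f g : Rd d →ₐ[ℂ] T) (J : Ideal T)
    (h : ∀ i, f (MvPolynomial.X i) - g (MvPolynomial.X i) ∈ J) (p : Rd d) :
    f p - g p ∈ J := by
  induction p using MvPolynomial.induction_on with
  | C c =>
      rw [← MvPolynomial.algebraMap_eq, AlgHom.commutes, AlgHom.commutes, sub_self]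
      exact zero_mem _
  | add p q hp hq =>
      rw [map_add, map_add, add_sub_add_comm]; exact add_mem hp hq
  | mul_X p i hp =>
      have key : f (p * MvPolynomial.X i) - g (p * MvPolynomial.X i)
          = f p * (f (MvPolynomial.X i) - g (MvPolynomial.X i))
            + g (MvPolynomial.X i) * (f p - g p) := by
        rw [map_mul, map_mul]; ring
      rw [key]
      exact add_mem (Ideal.mul_mem_left _ _ (h i)) (Ideal.mul_mem_left _ _ hp)


lemma FF_AY_le (d n : ℕ) (V : Rd d) (hV : ww d * V ^ 2 - 1 ∈ mm d ^ n) :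
    ∀ p ∈ AYideal d, FF d V p ∈ AZideal d ⊔ mm d ^ n := by
  intro p hp
  have main : AYideal d ≤ Ideal.comap (FF d V).toRingHom (AZideal d ⊔ mm d ^ n) := by
    rw [AYideal, Ideal.span_le]
    rintro p (⟨j, hj1, hj2, rfl⟩ | ⟨j, k, hj1, hjk, hk, rfl⟩)
    · simp only [SetLike.mem_coe, Ideal.mem_comap]
      have key : (FF d V).toRingHom (mvar d 2 * mvar d (3 + j) - mvar d 0 * mvar d (3 + (j + 1))
            - mvar d 1 * mvar d (3 + (j - 1)))
          = V * (mvar d 2 * mvar d (3 + j) - mvar d 0 * mvar d (3 + (j + 1))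
            - mvar d 1 * mvar d (3 + (j - 1))) := by
        simp only [AlgHom.toRingHom_eq_coe, RingHom.coe_coe, map_sub, map_mul,
          FF_mvar0, FF_mvar1, FF_mvar2, FF_mvar3]
        ring
      rw [key]
      exact Ideal.mem_sup_left (Ideal.mul_mem_left _ _
        (Ideal.subset_span (Or.inl ⟨j, hj1, hj2, rfl⟩)))
    · simp only [SetLike.mem_coe, Ideal.mem_comap]
      have hgenZ : (mvar d (3 + (j - 1)) * mvar d (3 + (k + 1)) - mvar d (3 + j) * mvar d (3 + k)
            - (mvar d 2 ^ 2 - 4 * (mvar d 0 * mvar d 1) - (d : Rd d) ^ 2)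
              * mvar d 0 ^ (d - k - 1) * mvar d 1 ^ (j - 1) *
                Psi (mvar d 0 * mvar d 1) (mvar d 2) (k - j)) ∈ AZideal d :=
        Ideal.subset_span (Or.inr ⟨j, k, hj1, hjk, hk, rfl⟩)
      have key : (FF d V).toRingHom (mvar d (3 + j) * mvar d (3 + k)
            - mvar d (3 + (j - 1)) * mvar d (3 + (k + 1))
            - mvar d 0 ^ (d - k - 1) * mvar d 1 ^ (j - 1) *
                Psi (mvar d 0 * mvar d 1) (mvar d 2) (k - j))
          = (-V ^ 2) * (mvar d (3 + (j - 1)) * mvar d (3 + (k + 1))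
              - mvar d (3 + j) * mvar d (3 + k)
              - (mvar d 2 ^ 2 - 4 * (mvar d 0 * mvar d 1) - (d : Rd d) ^ 2)
                * mvar d 0 ^ (d - k - 1) * mvar d 1 ^ (j - 1) *
                  Psi (mvar d 0 * mvar d 1) (mvar d 2) (k - j))
            + (ww d * V ^ 2 - 1) * (mvar d 0 ^ (d - k - 1) * mvar d 1 ^ (j - 1) *
                  Psi (mvar d 0 * mvar d 1) (mvar d 2) (k - j)) := by
        simp only [AlgHom.toRingHom_eq_coe, RingHom.coe_coe, map_sub, map_mul, map_pow,
          FF_mvar0, FF_mvar1, FF_mvar2, FF_mvar3, FF_psi]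
        unfold ww
        ring
      rw [key]
      exact add_mem (Ideal.mem_sup_left (Ideal.mul_mem_left _ _ hgenZ))
        (Ideal.mem_sup_right (Ideal.mul_mem_right _ _ hV))
  exact main hp

lemma FF_AZ_le (d n : ℕ) (U : Rd d) (hU : U ^ 2 - ww d ∈ mm d ^ n) :
    ∀ p ∈ AZideal d, FF d U p ∈ AYideal d ⊔ mm d ^ n := by
  intro p hp
  have main : AZideal d ≤ Ideal.comap (FF d U).toRingHom (AYideal d ⊔ mm d ^ n) := by
    rw [AZideal, Ideal.span_le]
    rintro p (⟨j, hj1, hj2, rfl⟩ | ⟨j, k, hj1, hjk, hk, rfl⟩)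
    · simp only [SetLike.mem_coe, Ideal.mem_comap]
      have key : (FF d U).toRingHom (mvar d 2 * mvar d (3 + j) - mvar d 0 * mvar d (3 + (j + 1))
            - mvar d 1 * mvar d (3 + (j - 1)))
          = U * (mvar d 2 * mvar d (3 + j) - mvar d 0 * mvar d (3 + (j + 1))
            - mvar d 1 * mvar d (3 + (j - 1))) := by
        simp only [AlgHom.toRingHom_eq_coe, RingHom.coe_coe, map_sub, map_mul,
          FF_mvar0, FF_mvar1, FF_mvar2, FF_mvar3]
        ring
      rw [key]
      exact Ideal.mem_sup_left (Ideal.mul_mem_left _ _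
        (Ideal.subset_span (Or.inl ⟨j, hj1, hj2, rfl⟩)))
    · simp only [SetLike.mem_coe, Ideal.mem_comap]
      have hgenY : (mvar d (3 + j) * mvar d (3 + k)
            - mvar d (3 + (j - 1)) * mvar d (3 + (k + 1))
            - mvar d 0 ^ (d - k - 1) * mvar d 1 ^ (j - 1) *
                Psi (mvar d 0 * mvar d 1) (mvar d 2) (k - j)) ∈ AYideal d :=
        Ideal.subset_span (Or.inr ⟨j, k, hj1, hjk, hk, rfl⟩)
      have key : (FF d U).toRingHom (mvar d (3 + (j - 1)) * mvar d (3 + (k + 1))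
            - mvar d (3 + j) * mvar d (3 + k)
            - (mvar d 2 ^ 2 - 4 * (mvar d 0 * mvar d 1) - (d : Rd d) ^ 2)
              * mvar d 0 ^ (d - k - 1) * mvar d 1 ^ (j - 1) *
                Psi (mvar d 0 * mvar d 1) (mvar d 2) (k - j))
          = (-U ^ 2) * (mvar d (3 + j) * mvar d (3 + k)
              - mvar d (3 + (j - 1)) * mvar d (3 + (k + 1))
              - mvar d 0 ^ (d - k - 1) * mvar d 1 ^ (j - 1) *
                  Psi (mvar d 0 * mvar d 1) (mvar d 2) (k - j))
            + (-(U ^ 2 - ww d)) * (mvar d 0 ^ (d - k - 1) * mvar d 1 ^ (j - 1) *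
                  Psi (mvar d 0 * mvar d 1) (mvar d 2) (k - j)) := by
        simp only [AlgHom.toRingHom_eq_coe, RingHom.coe_coe, map_sub, map_mul, map_pow,
          map_natCast, map_ofNat, FF_mvar0, FF_mvar1, FF_mvar2, FF_mvar3, FF_psi]
        unfold ww
        ring
      rw [key]
      exact add_mem (Ideal.mem_sup_left (Ideal.mul_mem_left _ _ hgenY))
        (Ideal.mem_sup_right (Ideal.mul_mem_right _ _ (neg_mem hU)))
  exact main hp

lemma FF_mm_pow (d n : ℕ) (V : Rd d) : ∀ p ∈ mm d ^ n, FF d V p ∈ mm d ^ n := by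
  intro p hp
  have h1 : Ideal.map (FF d V).toRingHom (mm d) ≤ mm d := by
    rw [mm, Ideal.map_span, Ideal.span_le]
    rintro q ⟨r, ⟨i, rfl⟩, rfl⟩
    simp only [SetLike.mem_coe, AlgHom.toRingHom_eq_coe, RingHom.coe_coe]
    rw [FF_X]
    split
    · exact Ideal.mul_mem_left _ _ (X_mem_mm d i)
    · exact X_mem_mm d i
  have h2 : (FF d V).toRingHom p ∈ Ideal.map (FF d V).toRingHom (mm d ^ n) :=
    Ideal.mem_map_of_mem _ hp
  rw [Ideal.map_pow] at h2
  exact Ideal.pow_right_mono h1 n h2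

-- ### quotient plumbing

lemma smul_top_eq {A : Type*} [CommRing A] (J : Ideal A) : (J • ⊤ : Ideal A) = J := by
  rw [smul_eq_mul, Ideal.mul_top]

lemma mY_eq (d : ℕ) : mY d = Ideal.map (Ideal.Quotient.mk (AYideal d)) (mm d) := by
  rw [mY, mm, Ideal.map_span, ← Set.range_comp]
  rfl

lemma mZ_eq (d : ℕ) : mZ d = Ideal.map (Ideal.Quotient.mk (AZideal d)) (mm d) := by
  rw [mZ, mm, Ideal.map_span, ← Set.range_comp]
  rfl

/-- The double quotient map `Rd d → AY d ⧸ (mY d ^ n • ⊤)`. -/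
noncomputable def mkkY (d n : ℕ) : Rd d →+* (AY d ⧸ ((mY d) ^ n • ⊤ : Ideal (AY d))) :=
  (Ideal.Quotient.mk ((mY d) ^ n • ⊤ : Ideal (AY d))).comp (Ideal.Quotient.mk (AYideal d))

noncomputable def mkkZ (d n : ℕ) : Rd d →+* (AZ d ⧸ ((mZ d) ^ n • ⊤ : Ideal (AZ d))) :=
  (Ideal.Quotient.mk ((mZ d) ^ n • ⊤ : Ideal (AZ d))).comp (Ideal.Quotient.mk (AZideal d))

lemma mkkY_zero (d n : ℕ) {p : Rd d} (hp : p ∈ AYideal d ⊔ mm d ^ n) : mkkY d n p = 0 := by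
  have hker : AYideal d ⊔ mm d ^ n ≤ RingHom.ker (mkkY d n) := by
    refine sup_le ?_ ?_
    · intro a ha
      simp [mkkY, RingHom.mem_ker, Ideal.Quotient.eq_zero_iff_mem.mpr ha]
    · intro a ha
      have h1 : Ideal.Quotient.mk (AYideal d) a ∈ ((mY d) ^ n • ⊤ : Ideal (AY d)) := by
        rw [smul_top_eq, mY_eq, ← Ideal.map_pow]
        exact Ideal.mem_map_of_mem _ ha
      simpa [mkkY, RingHom.mem_ker] using Ideal.Quotient.eq_zero_iff_mem.mpr h1
  exact hker hp

lemma mkkZ_zero (d n : ℕ) {p : Rd d} (hp : p ∈ AZideal d ⊔ mm d ^ n) : mkkZ d n p = 0 := by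
  have hker : AZideal d ⊔ mm d ^ n ≤ RingHom.ker (mkkZ d n) := by
    refine sup_le ?_ ?_
    · intro a ha
      simp [mkkZ, RingHom.mem_ker, Ideal.Quotient.eq_zero_iff_mem.mpr ha]
    · intro a ha
      have h1 : Ideal.Quotient.mk (AZideal d) a ∈ ((mZ d) ^ n • ⊤ : Ideal (AZ d)) := by
        rw [smul_top_eq, mZ_eq, ← Ideal.map_pow]
        exact Ideal.mem_map_of_mem _ ha
      simpa [mkkZ, RingHom.mem_ker] using Ideal.Quotient.eq_zero_iff_mem.mpr h1
  exact hker hp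

lemma mkkY_congr (d n : ℕ) {a b : Rd d} (h : a - b ∈ AYideal d ⊔ mm d ^ n) :
    mkkY d n a = mkkY d n b := by
  have := mkkY_zero d n h
  rwa [map_sub, sub_eq_zero] at this

lemma mkkZ_congr (d n : ℕ) {a b : Rd d} (h : a - b ∈ AZideal d ⊔ mm d ^ n) :
    mkkZ d n a = mkkZ d n b := by
  have := mkkZ_zero d n h
  rwa [map_sub, sub_eq_zero] at this

/-- Level-`n` ring hom `AY/mY^n → AZ/mZ^n`. -/
noncomputable def tau (d : ℕ) (hd : (d : ℂ) ≠ 0) (n : ℕ) :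
    (AY d ⧸ ((mY d) ^ n • ⊤ : Ideal (AY d))) →+* (AZ d ⧸ ((mZ d) ^ n • ⊤ : Ideal (AZ d))) := by
  refine Ideal.Quotient.lift _
    (Ideal.Quotient.lift (AYideal d) ((mkkZ d n).comp (FF d (WW d n)).toRingHom)
      (fun a ha => mkkZ_zero d n
        (FF_AY_le d n (WW d n)
          (Ideal.pow_le_pow_right (by omega) (hWW d hd n)) a ha))) ?_
  · intro a ha
    rw [smul_top_eq, mY_eq, ← Ideal.map_pow] at ha
    obtain ⟨p, hp, rfl⟩ := Ideal.mem_map_iff_of_surjective _ Ideal.Quotient.mk_surjective |>.1 ha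
    simpa using mkkZ_zero d n (Ideal.mem_sup_right (FF_mm_pow d n (WW d n) p hp))

noncomputable def sigma (d : ℕ) (hd : (d : ℂ) ≠ 0) (n : ℕ) :
    (AZ d ⧸ ((mZ d) ^ n • ⊤ : Ideal (AZ d))) →+* (AY d ⧸ ((mY d) ^ n • ⊤ : Ideal (AY d))) := by
  refine Ideal.Quotient.lift _
    (Ideal.Quotient.lift (AZideal d) ((mkkY d n).comp (FF d (ww d * WW d n)).toRingHom)
      (fun a ha => mkkY_zero d n (FF_AZ_le d n (ww d * WW d n) ?_ a ha))) ?_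
  · have : (ww d * WW d n) ^ 2 - ww d = ww d * (ww d * WW d n ^ 2 - 1) := by ring
    rw [this]
    exact Ideal.mul_mem_left _ _ (Ideal.pow_le_pow_right (by omega) (hWW d hd n))
  · intro a ha
    rw [smul_top_eq, mZ_eq, ← Ideal.map_pow] at ha
    obtain ⟨p, hp, rfl⟩ := Ideal.mem_map_iff_of_surjective _ Ideal.Quotient.mk_surjective |>.1 ha
    simpa using mkkY_zero d n (Ideal.mem_sup_right (FF_mm_pow d n (ww d * WW d n) p hp))

lemma tau_mk (d : ℕ) (hd : (d : ℂ) ≠ 0) (n : ℕ) (p : Rd d) :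
    tau d hd n (mkkY d n p) = mkkZ d n (FF d (WW d n) p) := by
  simp [tau, mkkY]

lemma sigma_mk (d : ℕ) (hd : (d : ℂ) ≠ 0) (n : ℕ) (p : Rd d) :
    sigma d hd n (mkkZ d n p) = mkkY d n (FF d (ww d * WW d n) p) := by
  simp [sigma, mkkZ]

lemma mkkY_surjective (d n : ℕ) : Function.Surjective (mkkY d n) := by
  intro x
  obtain ⟨y, rfl⟩ := Ideal.Quotient.mk_surjective x
  obtain ⟨p, rfl⟩ := Ideal.Quotient.mk_surjective y
  exact ⟨p, rfl⟩

lemma mkkZ_surjective (d n : ℕ) : Function.Surjective (mkkZ d n) := by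
  intro x
  obtain ⟨y, rfl⟩ := Ideal.Quotient.mk_surjective x
  obtain ⟨p, rfl⟩ := Ideal.Quotient.mk_surjective y
  exact ⟨p, rfl⟩

lemma sigma_tau (d : ℕ) (hd : (d : ℂ) ≠ 0) (n : ℕ) (x) :
    sigma d hd n (tau d hd n x) = x := by
  obtain ⟨p, rfl⟩ := mkkY_surjective d n x
  rw [tau_mk, sigma_mk]
  have hc : ∀ q : Rd d, mkkY d n (FF d (ww d * WW d n) q) = (mkkY d n).comp
      ((FF d (ww d * WW d n)).toRingHom) q := fun _ => rfl
  apply mkkY_congr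
  have := agree d ((FF d (ww d * WW d n)).comp (FF d (WW d n))) (AlgHom.id ℂ (Rd d))
      (AYideal d ⊔ mm d ^ n) ?_ p
  · simpa using this
  · intro i
    by_cases h3 : 3 ≤ (i : ℕ)
    · have key : (FF d (ww d * WW d n)) ((FF d (WW d n)) (MvPolynomial.X i))
          - MvPolynomial.X i = (ww d * WW d n ^ 2 - 1) * MvPolynomial.X i := by
        rw [FF_X, if_pos h3, map_mul, FF_X, if_pos h3, FF_WW]
        ring
      simp only [AlgHom.comp_apply, AlgHom.id_apply]
      rw [key]
      exact Ideal.mem_sup_right (Ideal.mul_mem_right _ _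
        (Ideal.pow_le_pow_right (by omega) (hWW d hd n)))
    · simp only [AlgHom.comp_apply, AlgHom.id_apply]
      rw [FF_X, if_neg h3, FF_X, if_neg h3, sub_self]
      exact zero_mem _

lemma tau_sigma (d : ℕ) (hd : (d : ℂ) ≠ 0) (n : ℕ) (x) :
    tau d hd n (sigma d hd n x) = x := by
  obtain ⟨p, rfl⟩ := mkkZ_surjective d n x
  rw [sigma_mk, tau_mk]
  apply mkkZ_congr
  have := agree d ((FF d (WW d n)).comp (FF d (ww d * WW d n))) (AlgHom.id ℂ (Rd d))
      (AZideal d ⊔ mm d ^ n) ?_ p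
  · simpa using this
  · intro i
    by_cases h3 : 3 ≤ (i : ℕ)
    · have key : (FF d (WW d n)) ((FF d (ww d * WW d n)) (MvPolynomial.X i))
          - MvPolynomial.X i = (ww d * WW d n ^ 2 - 1) * MvPolynomial.X i := by
        rw [FF_X, if_pos h3, map_mul, map_mul, FF_X, if_pos h3, FF_WW, FF_ww]
        ring
      simp only [AlgHom.comp_apply, AlgHom.id_apply]
      rw [key]
      exact Ideal.mem_sup_right (Ideal.mul_mem_right _ _
        (Ideal.pow_le_pow_right (by omega) (hWW d hd n)))
    · simp only [AlgHom.comp_apply, AlgHom.id_apply]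
      rw [FF_X, if_neg h3, FF_X, if_neg h3, sub_self]
      exact zero_mem _

lemma tau_trans (d : ℕ) (hd : (d : ℂ) ≠ 0) {m n : ℕ} (hmn : m ≤ n) (x) :
    AdicCompletion.transitionMap (mZ d) (AZ d) hmn (tau d hd n x)
      = tau d hd m (AdicCompletion.transitionMap (mY d) (AY d) hmn x) := by
  obtain ⟨p, rfl⟩ := mkkY_surjective d n x
  rw [tau_mk]
  have h1 : AdicCompletion.transitionMap (mZ d) (AZ d) hmn (mkkZ d n (FF d (WW d n) p))
      = mkkZ d m (FF d (WW d n) p) := rfl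
  have h2 : AdicCompletion.transitionMap (mY d) (AY d) hmn (mkkY d n p) = mkkY d m p := rfl
  rw [h1, h2, tau_mk]
  apply mkkZ_congr
  have := agree d (FF d (WW d n)) (FF d (WW d m)) (AZideal d ⊔ mm d ^ m) ?_ p
  · exact this
  · intro i
    by_cases h3 : 3 ≤ (i : ℕ)
    · have key : (FF d (WW d n)) (MvPolynomial.X i) - (FF d (WW d m)) (MvPolynomial.X i)
          = (WW d n - WW d m) * MvPolynomial.X i := by
        rw [FF_X, if_pos h3, FF_X, if_pos h3]; ring
      rw [key]
      exact Ideal.mem_sup_right (Ideal.mul_mem_right _ _ (hWdiff d hd m n hmn))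
    · rw [FF_X, if_neg h3, FF_X, if_neg h3, sub_self]
      exact zero_mem _


lemma sigma_trans (d : ℕ) (hd : (d : ℂ) ≠ 0) {m n : ℕ} (hmn : m ≤ n) (x) :
    AdicCompletion.transitionMap (mY d) (AY d) hmn (sigma d hd n x)
      = sigma d hd m (AdicCompletion.transitionMap (mZ d) (AZ d) hmn x) := by
  obtain ⟨p, rfl⟩ := mkkZ_surjective d n x
  rw [sigma_mk]
  have h1 : AdicCompletion.transitionMap (mY d) (AY d) hmn (mkkY d n (FF d (ww d * WW d n) p))
      = mkkY d m (FF d (ww d * WW d n) p) := rfl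
  have h2 : AdicCompletion.transitionMap (mZ d) (AZ d) hmn (mkkZ d n p) = mkkZ d m p := rfl
  rw [h1, h2, sigma_mk]
  apply mkkY_congr
  refine agree d (FF d (ww d * WW d n)) (FF d (ww d * WW d m)) (AYideal d ⊔ mm d ^ m) ?_ p
  intro i
  by_cases h3 : 3 ≤ (i : ℕ)
  · have key : FF d (ww d * WW d n) (MvPolynomial.X i) - FF d (ww d * WW d m) (MvPolynomial.X i)
        = ww d * (WW d n - WW d m) * MvPolynomial.X i := by
      rw [FF_X, if_pos h3, FF_X, if_pos h3]; ring
    rw [key]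
    exact Ideal.mem_sup_right (Ideal.mul_mem_right _ _
      (Ideal.mul_mem_left _ _ (hWdiff d hd m n hmn)))
  · rw [FF_X, if_neg h3, FF_X, if_neg h3, sub_self]
    exact zero_mem _

end Stmt9Aux

open Stmt9Aux in
/-- For `d ≥ 4`, the `𝔪_Y`-adic completion of `A_Y(d)` and the `𝔪_Z`-adic
completion of `A_Z(d)` are isomorphic as `ℂ`-algebras (a ring isomorphism compatible with the
structure maps from `ℂ`). -/
theorem stmt_9 (d : ℕ) (hd : 4 ≤ d) :
    ∃ e : AdicCompletion (mY d) (AY d) ≃+* AdicCompletion (mZ d) (AZ d),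
      ∀ c : ℂ,
        e (algebraMap (AY d) (AdicCompletion (mY d) (AY d)) (algebraMap ℂ (AY d) c)) =
          algebraMap (AZ d) (AdicCompletion (mZ d) (AZ d)) (algebraMap ℂ (AZ d) c) := by
  have hd0 : (d : ℂ) ≠ 0 := Nat.cast_ne_zero.mpr (by omega)
  refine ⟨{
    toFun := fun x => ⟨fun n => tau d hd0 n (x.val n), fun {m n} hmn => by
      rw [tau_trans d hd0 hmn, x.property hmn]⟩
    invFun := fun x => ⟨fun n => sigma d hd0 n (x.val n), fun {m n} hmn => by
      rw [sigma_trans d hd0 hmn, x.property hmn]⟩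
    left_inv := fun x => Subtype.ext (funext fun n => by exact sigma_tau d hd0 n (x.val n))
    right_inv := fun x => Subtype.ext (funext fun n => by exact tau_sigma d hd0 n (x.val n))
    map_mul' := fun x y => Subtype.ext (funext fun n => by
      show tau d hd0 n ((x * y).val n) = tau d hd0 n (x.val n) * tau d hd0 n (y.val n)
      rw [AdicCompletion.val_mul, map_mul])
    map_add' := fun x y => Subtype.ext (funext fun n => by
      show tau d hd0 n ((x + y).val n) = tau d hd0 n (x.val n) + tau d hd0 n (y.val n)
      rw [AdicCompletion.val_add_apply, map_add]) }, ?_⟩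
  intro c
  apply Subtype.ext
  funext n
  have hCY : algebraMap ℂ (AY d) c = Ideal.Quotient.mk (AYideal d) (MvPolynomial.C c) := by
    rw [← MvPolynomial.algebraMap_eq, Ideal.Quotient.mk_algebraMap]
  have hCZ : algebraMap ℂ (AZ d) c = Ideal.Quotient.mk (AZideal d) (MvPolynomial.C c) := by
    rw [← MvPolynomial.algebraMap_eq, Ideal.Quotient.mk_algebraMap]
  show tau d hd0 n ((algebraMap (AY d) (AdicCompletion (mY d) (AY d))
      (algebraMap ℂ (AY d) c)).val n) = _
  have hvalY : (algebraMap (AY d) (AdicCompletion (mY d) (AY d)) (algebraMap ℂ (AY d) c)).val n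
      = Ideal.Quotient.mk ((mY d) ^ n • ⊤ : Ideal (AY d)) (algebraMap ℂ (AY d) c) := rfl
  have hvalZ : (algebraMap (AZ d) (AdicCompletion (mZ d) (AZ d)) (algebraMap ℂ (AZ d) c)).val n
      = Ideal.Quotient.mk ((mZ d) ^ n • ⊤ : Ideal (AZ d)) (algebraMap ℂ (AZ d) c) := rfl
  rw [hvalY, hvalZ, hCY, hCZ]
  have h1 : Ideal.Quotient.mk ((mY d) ^ n • ⊤ : Ideal (AY d))
      (Ideal.Quotient.mk (AYideal d) (MvPolynomial.C c)) = mkkY d n (MvPolynomial.C c) := rfl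
  have h2 : Ideal.Quotient.mk ((mZ d) ^ n • ⊤ : Ideal (AZ d))
      (Ideal.Quotient.mk (AZideal d) (MvPolynomial.C c)) = mkkZ d n (MvPolynomial.C c) := rfl
  rw [h1, h2, tau_mk, FF_C]
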